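/- arXiv:1712.04653 — 2 statements merged into one kernel-verified Lean document; each statement's English description precedes it below -/
import Mathlib

section
/- Let f be the uniform limit of the sequence (f_k) and let g = f + 2/3. Then for every k ∈ ℕ, A_{k+1} = f(A_k) ∪ g(A_k), where A_k = ⋃ 𝓘_k. -/
open Set MeasureTheory Filter

set_option maxHeartbeats 2000000 in
theorem stmt_18
    (ε w : ℕ → ℝ)
    (hw1 : w 1 = 1) (hε1 : ε 1 = 1 / 6)
    (hwrec : ∀ k, 1 ≤ k → w (k + 1) = w k / 2 - ε k)
    (hεpos : ∀ k, 1 ≤ k → 0 < ε (k + 1))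
    (hεgeom : ∀ k, 1 ≤ k → 2 ^ k * ε (k + 1) < 1 / 2 * (1 / 4 ^ k))
    (hεquot : ∀ k, 1 ≤ k → ε (k + 1) / ε k < 1 / 2)
    (hεw : ∀ k, 1 ≤ k → ε (k + 1) < w k / 4 - ε k / 2)
    (I : ℕ → Set (ℝ × ℝ))
    (hI1 : I 1 = {((0 : ℝ), (1 : ℝ))})
    (hIrec : ∀ k, 1 ≤ k → I (k + 1) =
      ⋃ p ∈ I k, {(p.1, (p.1 + p.2) / 2 - ε k), ((p.1 + p.2) / 2 + ε k, p.2)})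
    (A : ℕ → Set ℝ)
    (hA : ∀ k, A k = ⋃ p ∈ I k, Set.Icc p.1 p.2)
    (f : ℕ → ℝ → ℝ)
    (hf0 : ∀ x, f 0 x = x / 3)
    (hfmaps : ∀ k, Set.MapsTo (f k) (Set.Icc (0 : ℝ) 1) (Set.Icc (0 : ℝ) 1))
    (hfleft : ∀ k, 1 ≤ k → ∀ p ∈ I k, ∀ x : ℝ, p.1 ≤ x → x ≤ (p.1 + p.2) / 2 - ε k →
      f k x = w (k + 2) / w (k + 1) * (x - p.1) + f (k - 1) p.1)
    (hfmid : ∀ k, 1 ≤ k → ∀ p ∈ I k, ∀ x : ℝ, |x - (p.1 + p.2) / 2| < ε k →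
      f k x = ε (k + 1) / ε k * (x - (p.1 + p.2) / 2 + ε k) + f (k - 1) p.1 + w (k + 2))
    (hfright : ∀ k, 1 ≤ k → ∀ p ∈ I k, ∀ x : ℝ, (p.1 + p.2) / 2 + ε k ≤ x → x ≤ p.2 →
      f k x = w (k + 2) / w (k + 1) * (x - (p.1 + p.2) / 2 - ε k) + f (k - 1) p.1
        + w (k + 2) + 2 * ε (k + 1))
    (hfout : ∀ k, 1 ≤ k → ∀ x ∈ Set.Icc (0 : ℝ) 1 \ (⋃ p ∈ I k, Set.Icc p.1 p.2),
      f k x = f (k - 1) x)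
    (F : ℝ → ℝ)
    (hFlim : ∀ x ∈ Set.Icc (0 : ℝ) 1, Filter.Tendsto (fun k => f k x) Filter.atTop (nhds (F x)))
    (g : ℝ → ℝ) (hg : ∀ x, g x = F x + 2 / 3)
    :
    ∀ k, 1 ≤ k → A (k + 1) = F '' A k ∪ g '' A k := by
  -- positivity of ε
  have hε : ∀ k, 1 ≤ k → 0 < ε k := by
    rintro (_|k) hk
    · omega
    · rcases Nat.eq_or_lt_of_le hk with h | h
      · rw [show k = 0 by omega, hε1]; norm_num
      · exact hεpos k (by omega)
  -- 2 ε k < w k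
  have hεw2 : ∀ k, 1 ≤ k → 2 * ε k < w k := by
    rintro (_|k) hk
    · omega
    · rcases Nat.eq_or_lt_of_le hk with h | h
      · rw [show k = 0 by omega, hε1, hw1]; norm_num
      · have hk1 : 1 ≤ k := by omega
        have := hεw k hk1
        have := hwrec k hk1
        linarith
  have hwpos : ∀ k, 1 ≤ k → 0 < w k := fun k hk =>
    lt_trans (by linarith [hε k hk]) (hεw2 k hk)
  -- w (k+1) = 2 w (k+2) + 2 ε (k+1)
  have hwsum : ∀ k, 1 ≤ k → w (k + 1) = 2 * w (k + 2) + 2 * ε (k + 1) := by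
    intro k hk
    have := hwrec (k + 1) (by omega)
    linarith
  -- structure of intervals: length and within [0,1]
  have hstruct : ∀ k, 1 ≤ k → ∀ p ∈ I k, p.2 - p.1 = w k ∧ 0 ≤ p.1 ∧ p.2 ≤ 1 := by
    intro k hk
    induction k, hk using Nat.le_induction with
    | base =>
      intro p hp
      rw [hI1, Set.mem_singleton_iff] at hp
      subst hp
      simp [hw1]
    | succ k hk ih =>
      intro q hq
      rw [hIrec k hk] at hq
      simp only [Set.mem_iUnion, Set.mem_insert_iff, Set.mem_singleton_iff] at hq
      obtain ⟨p, hp, hcase⟩ := hq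
      obtain ⟨hlen, h0, h1⟩ := ih p hp
      have hε' := hε k hk
      have hw' := hwrec k hk
      have hw2 := hwpos (k+1) (by omega)
      rcases hcase with rfl | rfl <;> constructor <;> simp <;>
        [skip; constructor; skip; constructor] <;> linarith
  -- membership in I (k+1)
  have hmem : ∀ k, 1 ≤ k → ∀ q : ℝ × ℝ, q ∈ I (k + 1) ↔
      ∃ p ∈ I k, q = (p.1, (p.1 + p.2) / 2 - ε k) ∨ q = ((p.1 + p.2) / 2 + ε k, p.2) := by
    intro k hk q
    constructor
    · intro h
      rw [hIrec k hk] at h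
      simp only [Set.mem_iUnion, Set.mem_insert_iff, Set.mem_singleton_iff] at h
      obtain ⟨p, hp, h⟩ := h
      exact ⟨p, hp, h⟩
    · rintro ⟨p, hp, h⟩
      rw [hIrec k hk]
      simp only [Set.mem_iUnion, Set.mem_insert_iff, Set.mem_singleton_iff]
      exact ⟨p, hp, h⟩
  -- children lie within the parent, and basic ordering
  have hord : ∀ k, 1 ≤ k → ∀ p ∈ I k,
      p.1 + w (k+1) = (p.1 + p.2) / 2 - ε k ∧ (p.1 + p.2) / 2 + ε k + w (k+1) = p.2 := by
    intro k hk p hp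
    obtain ⟨hlen, h0, h1⟩ := hstruct k hk p hp
    have := hwrec k hk
    constructor <;> linarith
  -- disjointness of intervals at the same level
  have hdisj : ∀ k, 1 ≤ k → ∀ p ∈ I k, ∀ q ∈ I k, p ≠ q → p.2 < q.1 ∨ q.2 < p.1 := by
    intro k hk
    induction k, hk using Nat.le_induction with
    | base =>
      intro p hp q hq hne
      rw [hI1, Set.mem_singleton_iff] at hp hq
      exact absurd (hp.trans hq.symm) hne
    | succ k hk ih =>
      intro p hp q hq hne
      rw [hmem k hk] at hp hq
      obtain ⟨p', hp', hcp⟩ := hp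
      obtain ⟨q', hq', hcq⟩ := hq
      have hεk := hε k hk
      have hwk1 := hwpos (k+1) (by omega)
      obtain ⟨hop1, hop2⟩ := hord k hk p' hp'
      obtain ⟨hoq1, hoq2⟩ := hord k hk q' hq'
      by_cases hpq : p' = q'
      · subst hpq
        rcases hcp with rfl | rfl <;> rcases hcq with rfl | rfl
        · exact absurd rfl hne
        · left; dsimp only; linarith
        · right; dsimp only; linarith
        · exact absurd rfl hne
      · rcases ih p' hp' q' hq' hpq with h | h
        · left
          rcases hcp with rfl | rfl <;> rcases hcq with rfl | rfl <;> dsimp only <;> linarith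
        · right
          rcases hcp with rfl | rfl <;> rcases hcq with rfl | rfl <;> dsimp only <;> linarith
  -- exact values of f k at the four special points of p ∈ I k
  have hV : ∀ k, 1 ≤ k → ∀ p ∈ I k,
      f k p.1 = f (k-1) p.1 ∧
      f k ((p.1 + p.2) / 2 - ε k) = f (k-1) p.1 + w (k + 2) ∧
      f k ((p.1 + p.2) / 2 + ε k) = f (k-1) p.1 + w (k + 2) + 2 * ε (k + 1) ∧
      f k p.2 = f (k-1) p.1 + w (k + 1) := by
    intro k hk p hp
    obtain ⟨hlen, h0, h1⟩ := hstruct k hk p hp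
    obtain ⟨ho1, ho2⟩ := hord k hk p hp
    have hwk1 := hwpos (k+1) (by omega)
    have hmw : (p.1 + p.2) / 2 - ε k - p.1 = w (k+1) := by linarith
    have hbw : p.2 - ((p.1 + p.2) / 2 + ε k) = w (k+1) := by linarith
    have hww : w (k+2) / w (k+1) * w (k+1) = w (k+2) := by
      field_simp
    refine ⟨?_, ?_, ?_, ?_⟩
    · rw [hfleft k hk p hp p.1 le_rfl (by linarith)]
      ring
    · rw [hfleft k hk p hp _ (by linarith) le_rfl, hmw, hww]
      ring
    · rw [hfright k hk p hp _ le_rfl (by linarith)]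
      ring
    · rw [hfright k hk p hp p.2 (by linarith) le_rfl]
      rw [show p.2 - (p.1 + p.2) / 2 - ε k = w (k+1) from by linarith, hww]
      have := hwsum k hk
      linarith
  -- f (k-1) p.2 = f (k-1) p.1 + w (k+1)
  have hC : ∀ k, 1 ≤ k → ∀ p ∈ I k, f (k-1) p.2 = f (k-1) p.1 + w (k + 1) := by
    intro k hk
    induction k, hk using Nat.le_induction with
    | base =>
      intro p hp
      rw [hI1, Set.mem_singleton_iff] at hp
      subst hp
      simp only [hf0]
      have := hwrec 1 le_rfl
      rw [hw1, hε1] at this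
      norm_num [this]
    | succ k hk ih =>
      intro q hq
      rw [hmem k hk] at hq
      obtain ⟨p, hp, hcase⟩ := hq
      obtain ⟨hV1, hV2, hV3, hV4⟩ := hV k hk p hp
      have hws := hwsum k hk
      simp only [Nat.add_sub_cancel]
      rcases hcase with rfl | rfl <;> dsimp only
      · rw [hV2, hV1]
      · rw [hV4, hV3]; linarith
  -- f k p.2 = f (k-1) p.2
  have hV5 : ∀ k, 1 ≤ k → ∀ p ∈ I k, f k p.2 = f (k-1) p.2 := by
    intro k hk p hp
    rw [(hV k hk p hp).2.2.2, hC k hk p hp]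
  -- endpoints persist to deeper levels
  have hpers : ∀ k, 1 ≤ k → ∀ p ∈ I k, ∀ n : ℕ,
      (∃ q ∈ I (k + n), q.1 = p.1) ∧ (∃ q ∈ I (k + n), q.2 = p.2) := by
    intro k hk p hp n
    induction n with
    | zero => exact ⟨⟨p, hp, rfl⟩, ⟨p, hp, rfl⟩⟩
    | succ n ih =>
      obtain ⟨⟨qL, hqL, hqL1⟩, ⟨qR, hqR, hqR2⟩⟩ := ih
      constructor
      · refine ⟨(qL.1, (qL.1 + qL.2) / 2 - ε (k + n)), ?_, hqL1⟩
        exact (hmem (k+n) (by omega) _).mpr ⟨qL, hqL, Or.inl rfl⟩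
      · refine ⟨((qR.1 + qR.2) / 2 + ε (k + n), qR.2), ?_, hqR2⟩
        exact (hmem (k+n) (by omega) _).mpr ⟨qR, hqR, Or.inr rfl⟩
  -- values of f j at endpoints are eventually constant
  have hconst : ∀ k, 1 ≤ k → ∀ p ∈ I k, ∀ n : ℕ,
      f (k - 1 + n) p.1 = f (k-1) p.1 ∧ f (k - 1 + n) p.2 = f (k-1) p.2 := by
    intro k hk p hp n
    induction n with
    | zero => simp
    | succ n ih =>
      obtain ⟨⟨qL, hqL, hqL1⟩, ⟨qR, hqR, hqR2⟩⟩ := hpers k hk p hp n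
      have hkn : k - 1 + (n + 1) = k + n := by omega
      have hkn2 : k + n - 1 = k - 1 + n := by omega
      have h1 := (hV (k + n) (by omega) qL hqL).1
      have h2 := hV5 (k + n) (by omega) qR hqR
      rw [hqL1] at h1
      rw [hqR2] at h2
      constructor
      · rw [hkn, h1, hkn2, ih.1]
      · rw [hkn, h2, hkn2, ih.2]
  -- endpoints are in [0,1]
  have hin01 : ∀ k, 1 ≤ k → ∀ p ∈ I k, p.1 ∈ Set.Icc (0:ℝ) 1 ∧ p.2 ∈ Set.Icc (0:ℝ) 1 := by
    intro k hk p hp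
    obtain ⟨hlen, h0, h1⟩ := hstruct k hk p hp
    have := hwpos k hk
    constructor <;> constructor <;> linarith
  -- F at endpoints
  have hFa : ∀ k, 1 ≤ k → ∀ p ∈ I k, F p.1 = f (k-1) p.1 ∧ F p.2 = f (k-1) p.2 := by
    intro k hk p hp
    obtain ⟨h1, h2⟩ := hin01 k hk p hp
    constructor
    · refine tendsto_nhds_unique (hFlim p.1 h1) ?_
      refine Tendsto.congr' ?_ tendsto_const_nhds
      filter_upwards [Filter.eventually_ge_atTop (k-1)] with j hj
      obtain ⟨n, rfl⟩ := Nat.exists_eq_add_of_le hj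
      exact ((hconst k hk p hp n).1).symm
    · refine tendsto_nhds_unique (hFlim p.2 h2) ?_
      refine Tendsto.congr' ?_ tendsto_const_nhds
      filter_upwards [Filter.eventually_ge_atTop (k-1)] with j hj
      obtain ⟨n, rfl⟩ := Nat.exists_eq_add_of_le hj
      exact ((hconst k hk p hp n).2).symm
  -- region analysis: formula and bounds for f j on an interval of I j
  have hfine : ∀ j, 1 ≤ j → ∀ p ∈ I j, ∀ x ∈ Set.Icc p.1 p.2,
      (p.1 ≤ x ∧ x ≤ (p.1 + p.2) / 2 - ε j ∧
        f j x = f (j-1) p.1 + w (j+2) / w (j+1) * (x - p.1) ∧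
        f (j-1) p.1 ≤ f j x ∧ f j x ≤ f (j-1) p.1 + w (j+2)) ∨
      ((p.1 + p.2) / 2 - ε j < x ∧ x < (p.1 + p.2) / 2 + ε j ∧
        f j x = f (j-1) p.1 + w (j+2) + ε (j+1) / ε j * (x - (p.1 + p.2) / 2 + ε j) ∧
        f (j-1) p.1 + w (j+2) ≤ f j x ∧ f j x ≤ f (j-1) p.1 + w (j+2) + 2 * ε (j+1)) ∨
      ((p.1 + p.2) / 2 + ε j ≤ x ∧ x ≤ p.2 ∧
        f j x = f (j-1) p.1 + w (j+2) + 2 * ε (j+1) + w (j+2) / w (j+1) * (x - (p.1 + p.2) / 2 - ε j) ∧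
        f (j-1) p.1 + w (j+2) + 2 * ε (j+1) ≤ f j x ∧ f j x ≤ f (j-1) p.1 + w (j+1)) := by
    intro j hj p hp x hx
    obtain ⟨hx1, hx2⟩ := hx
    have hεj := hε j hj
    have hεj1 := hεpos j hj
    have hwj1 := hwpos (j+1) (by omega)
    have hwj2 := hwpos (j+2) (by omega)
    have hws := hwsum j hj
    obtain ⟨ho1, ho2⟩ := hord j hj p hp
    have hs : (0:ℝ) ≤ w (j+2) / w (j+1) := le_of_lt (div_pos hwj2 hwj1)
    have hsw : w (j+2) / w (j+1) * w (j+1) = w (j+2) := by field_simp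
    have ht : (0:ℝ) ≤ ε (j+1) / ε j := le_of_lt (div_pos hεj1 hεj)
    have htw : ε (j+1) / ε j * (2 * ε j) = 2 * ε (j+1) := by field_simp
    rcases le_or_gt x ((p.1 + p.2) / 2 - ε j) with hc1 | hc1
    · left
      have hform := hfleft j hj p hp x hx1 hc1
      refine ⟨hx1, hc1, by rw [hform]; ring, ?_, ?_⟩
      · have := mul_nonneg hs (by linarith : (0:ℝ) ≤ x - p.1)
        linarith [hform]
      · have := mul_le_mul_of_nonneg_left (by linarith : x - p.1 ≤ w (j+1)) hs
        rw [hsw] at this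
        linarith [hform]
    · rcases lt_or_ge x ((p.1 + p.2) / 2 + ε j) with hc2 | hc2
      · right; left
        have habs : |x - (p.1 + p.2) / 2| < ε j := by
          rw [abs_lt]; constructor <;> linarith
        have hform := hfmid j hj p hp x habs
        refine ⟨hc1, hc2, by rw [hform]; ring, ?_, ?_⟩
        · have := mul_nonneg ht (by linarith : (0:ℝ) ≤ x - (p.1 + p.2) / 2 + ε j)
          linarith [hform]
        · have := mul_le_mul_of_nonneg_left
            (by linarith : x - (p.1 + p.2) / 2 + ε j ≤ 2 * ε j) ht
          rw [htw] at this
          linarith [hform]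
      · right; right
        have hform := hfright j hj p hp x hc2 hx2
        refine ⟨hc2, hx2, by rw [hform]; ring, ?_, ?_⟩
        · have := mul_nonneg hs (by linarith : (0:ℝ) ≤ x - (p.1 + p.2) / 2 - ε j)
          linarith [hform]
        · have := mul_le_mul_of_nonneg_left
            (by linarith : x - (p.1 + p.2) / 2 - ε j ≤ w (j+1)) hs
          rw [hsw] at this
          linarith [hform]
  -- coarse bounds
  have hbnd : ∀ j, 1 ≤ j → ∀ p ∈ I j, ∀ x ∈ Set.Icc p.1 p.2,
      f (j-1) p.1 ≤ f j x ∧ f j x ≤ f (j-1) p.1 + w (j+1) := by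
    intro j hj p hp x hx
    have hεj1 := hεpos j hj
    have hwj2 := hwpos (j+2) (by omega)
    have hws := hwsum j hj
    rcases hfine j hj p hp x hx with ⟨_,_,_,hlo,hhi⟩|⟨_,_,_,hlo,hhi⟩|⟨_,_,_,hlo,hhi⟩ <;>
      constructor <;> linarith
  -- monotonicity within an interval
  have hW : ∀ j, 1 ≤ j → ∀ p ∈ I j, ∀ x ∈ Set.Icc p.1 p.2, ∀ y ∈ Set.Icc p.1 p.2,
      x ≤ y → f j x ≤ f j y := by
    intro j hj p hp x hx y hy hxy
    have hεj := hε j hj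
    have hεj1 := hεpos j hj
    have hwj1 := hwpos (j+1) (by omega)
    have hwj2 := hwpos (j+2) (by omega)
    have hs : (0:ℝ) ≤ w (j+2) / w (j+1) := le_of_lt (div_pos hwj2 hwj1)
    have ht : (0:ℝ) ≤ ε (j+1) / ε j := le_of_lt (div_pos hεj1 hεj)
    have hint1 := mul_le_mul_of_nonneg_left (by linarith : x - p.1 ≤ y - p.1) hs
    have hint2 := mul_le_mul_of_nonneg_left
      (by linarith : x - (p.1 + p.2) / 2 + ε j ≤ y - (p.1 + p.2) / 2 + ε j) ht
    have hint3 := mul_le_mul_of_nonneg_left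
      (by linarith : x - (p.1 + p.2) / 2 - ε j ≤ y - (p.1 + p.2) / 2 - ε j) hs
    rcases hfine j hj p hp x hx with ⟨h1,h2,hfx,hlo,hhi⟩|⟨h1,h2,hfx,hlo,hhi⟩|⟨h1,h2,hfx,hlo,hhi⟩ <;>
      rcases hfine j hj p hp y hy with ⟨g1,g2,hfy,glo,ghi⟩|⟨g1,g2,hfy,glo,ghi⟩|⟨g1,g2,hfy,glo,ghi⟩ <;>
      linarith
  -- membership in A
  have hAmem : ∀ j, ∀ x : ℝ, x ∈ A j ↔ ∃ p ∈ I j, x ∈ Set.Icc p.1 p.2 := by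
    intro j x
    rw [hA j]
    simp only [Set.mem_iUnion]
    tauto
  -- f j is monotone on [0,1]
  have hmono : ∀ j, ∀ x ∈ Set.Icc (0:ℝ) 1, ∀ y ∈ Set.Icc (0:ℝ) 1, x ≤ y → f j x ≤ f j y := by
    intro j
    induction j with
    | zero =>
      intro x _ y _ hxy
      rw [hf0, hf0]
      linarith
    | succ k ih =>
      intro x hx y hy hxy
      have hk1 : 1 ≤ k + 1 := by omega
      have hfo : ∀ z ∈ Set.Icc (0:ℝ) 1, (¬ ∃ p ∈ I (k+1), z ∈ Set.Icc p.1 p.2) →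
          f (k+1) z = f k z := by
        intro z hz hnz
        have := hfout (k+1) hk1 z ⟨hz, by
          simp only [Set.mem_iUnion, not_exists]
          intro p hp hzp
          exact hnz ⟨p, hp, hzp⟩⟩
        simpa using this
      by_cases hxA : ∃ p ∈ I (k+1), x ∈ Set.Icc p.1 p.2
      · obtain ⟨p, hp, hxp⟩ := hxA
        have hbx := hbnd (k+1) hk1 p hp x hxp
        simp only [Nat.add_sub_cancel] at hbx
        have hCp := hC (k+1) hk1 p hp
        simp only [Nat.add_sub_cancel] at hCp
        by_cases hyA : ∃ q ∈ I (k+1), y ∈ Set.Icc q.1 q.2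
        · obtain ⟨q, hq, hyq⟩ := hyA
          have hby := hbnd (k+1) hk1 q hq y hyq
          simp only [Nat.add_sub_cancel] at hby
          by_cases hpq : p = q
          · subst hpq
            exact hW (k+1) hk1 p hp x hxp y hyq hxy
          · rcases hdisj (k+1) hk1 p hp q hq hpq with h | h
            · have hih := ih p.2 (hin01 _ hk1 p hp).2 q.1 (hin01 _ hk1 q hq).1 (le_of_lt h)
              linarith
            · exfalso
              linarith [hxp.1, hyq.2]
        · have hyp2 : p.2 < y := by
            by_contra hle
            push_neg at hle
            exact hyA ⟨p, hp, le_trans hxp.1 hxy, hle⟩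
          have hfy := hfo y hy hyA
          have hih := ih p.2 (hin01 _ hk1 p hp).2 y hy (le_of_lt hyp2)
          linarith
      · have hfx := hfo x hx hxA
        by_cases hyA : ∃ q ∈ I (k+1), y ∈ Set.Icc q.1 q.2
        · obtain ⟨q, hq, hyq⟩ := hyA
          have hby := hbnd (k+1) hk1 q hq y hyq
          simp only [Nat.add_sub_cancel] at hby
          have hxq1 : x < q.1 := by
            by_contra hle
            push_neg at hle
            exact hxA ⟨q, hq, hle, le_trans hxy hyq.2⟩
          have hih := ih x hx q.1 (hin01 _ hk1 q hq).1 (le_of_lt hxq1)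
          linarith
        · have hfy := hfo y hy hyA
          rw [hfx, hfy]
          exact ih x hx y hy hxy
  -- F is monotone on [0,1]
  have hFmono : ∀ x ∈ Set.Icc (0:ℝ) 1, ∀ y ∈ Set.Icc (0:ℝ) 1, x ≤ y → F x ≤ F y := by
    intro x hx y hy hxy
    exact le_of_tendsto_of_tendsto' (hFlim x hx) (hFlim y hy)
      (fun j => hmono j x hx y hy hxy)
  -- A is decreasing
  have hAdec : ∀ j, 1 ≤ j → A (j + 1) ⊆ A j := by
    intro j hj x hx
    rw [hAmem] at hx ⊢
    obtain ⟨q, hq, hxq⟩ := hx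
    rw [hmem j hj] at hq
    obtain ⟨p, hp, hcase⟩ := hq
    obtain ⟨ho1, ho2⟩ := hord j hj p hp
    have hεj := hε j hj
    have hwj1 := hwpos (j+1) (by omega)
    refine ⟨p, hp, ?_⟩
    rcases hcase with rfl | rfl <;> dsimp only at hxq <;>
      exact ⟨by linarith [hxq.1], by linarith [hxq.2]⟩
  have hAchain : ∀ j, 1 ≤ j → ∀ n, A (j + n) ⊆ A j := by
    intro j hj n
    induction n with
    | zero => exact subset_rfl
    | succ n ih => exact (hAdec (j + n) (by omega)).trans ih
  -- on the middle gap, F = f j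
  have hgap : ∀ j, 1 ≤ j → ∀ p ∈ I j, ∀ x : ℝ, |x - (p.1 + p.2) / 2| < ε j →
      F x = f j x := by
    intro j hj p hp x habs
    obtain ⟨hlen, h0, h1⟩ := hstruct j hj p hp
    have hεj := hε j hj
    have hεw2j := hεw2 j hj
    rw [abs_lt] at habs
    have hxin : x ∈ Set.Icc (0:ℝ) 1 := by
      constructor <;> [linarith [habs.1]; linarith [habs.2]]
    -- x is not in A (j+1)
    have hxnotA : x ∉ A (j + 1) := by
      intro hxA
      rw [hAmem] at hxA
      obtain ⟨q, hq, hxq⟩ := hxA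
      rw [hmem j hj] at hq
      obtain ⟨p', hp', hcase⟩ := hq
      by_cases hpp : p' = p
      · subst hpp
        rcases hcase with rfl | rfl <;> dsimp only at hxq <;>
          [linarith [hxq.2, habs.1]; linarith [hxq.1, habs.2]]
      · obtain ⟨ho1, ho2⟩ := hord j hj p' hp'
        have hwj1 := hwpos (j+1) (by omega)
        have hεj' := hε j hj
        have hxp' : p'.1 ≤ x ∧ x ≤ p'.2 := by
          rcases hcase with rfl | rfl <;> dsimp only at hxq <;>
            exact ⟨by linarith [hxq.1], by linarith [hxq.2]⟩
        rcases hdisj j hj p' hp' p hp hpp with h | h <;> linarith [hxp'.1, hxp'.2]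
    -- hence f is eventually constant at x
    have hconst2 : ∀ n : ℕ, f (j + n) x = f j x := by
      intro n
      induction n with
      | zero => rfl
      | succ n ih =>
        have hnotA : x ∉ A (j + n + 1) := by
          intro hxA
          exact hxnotA (hAchain (j + 1) (by omega) n (by
            rw [show j + 1 + n = j + n + 1 by omega]; exact hxA))
        have := hfout (j + n + 1) (by omega) x ⟨hxin, by rw [← hA (j + n + 1)]; exact hnotA⟩
        rw [show j + (n + 1) = j + n + 1 by omega, this, Nat.add_sub_cancel, ← ih]
    refine tendsto_nhds_unique (hFlim x hxin) ?_
    refine Tendsto.congr' ?_ tendsto_const_nhds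
    filter_upwards [Filter.eventually_ge_atTop j] with i hi
    obtain ⟨n, rfl⟩ := Nat.exists_eq_add_of_le hi
    exact (hconst2 n).symm
  -- key values of F
  have hkeyF : ∀ j, 1 ≤ j → ∀ p ∈ I j,
      F p.1 = f (j-1) p.1 ∧ F p.2 = f (j-1) p.1 + w (j+1) ∧
      F ((p.1 + p.2) / 2 - ε j) = f (j-1) p.1 + w (j+2) ∧
      F ((p.1 + p.2) / 2 + ε j) = f (j-1) p.1 + w (j+2) + 2 * ε (j+1) := by
    intro j hj p hp
    obtain ⟨hV1, hV2, hV3, hV4⟩ := hV j hj p hp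
    have hL : (p.1, (p.1 + p.2) / 2 - ε j) ∈ I (j + 1) :=
      (hmem j hj _).mpr ⟨p, hp, Or.inl rfl⟩
    have hR : ((p.1 + p.2) / 2 + ε j, p.2) ∈ I (j + 1) :=
      (hmem j hj _).mpr ⟨p, hp, Or.inr rfl⟩
    have hFL := hFa (j+1) (by omega) _ hL
    have hFR := hFa (j+1) (by omega) _ hR
    simp only [Nat.add_sub_cancel] at hFL hFR
    refine ⟨?_, ?_, ?_, ?_⟩
    · rw [hFL.1, hV1]
    · rw [hFR.2, hV4]
    · rw [hFL.2, hV2]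
    · rw [hFR.1, hV3]
  -- geometric decay of w
  have hwgeom : ∀ j, 1 ≤ j → ∀ n, w (j + n) ≤ w j * (1/2)^n := by
    intro j hj n
    induction n with
    | zero => simp
    | succ n ih =>
      have hrec := hwrec (j + n) (by omega)
      have hεjn := hε (j + n) (by omega)
      rw [show j + (n+1) = (j + n) + 1 by omega, hrec]
      have : w (j + n) / 2 ≤ w j * (1/2)^n / 2 := by linarith
      calc w (j+n)/2 - ε (j+n) ≤ w (j+n)/2 := by linarith
        _ ≤ w j * (1/2)^n / 2 := this
        _ = w j * (1/2)^(n+1) := by ring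
  have hwzero : ∀ j, 1 ≤ j → ∀ d : ℝ, (∀ n : ℕ, d ≤ w (j + n)) → d ≤ 0 := by
    intro j hj d hd
    have htends : Filter.Tendsto (fun n : ℕ => w j * (1/2)^n) Filter.atTop (nhds 0) := by
      have := tendsto_pow_atTop_nhds_zero_of_lt_one (by norm_num : (0:ℝ) ≤ 1/2)
        (by norm_num : (1:ℝ)/2 < 1)
      simpa using this.const_mul (w j)
    refine ge_of_tendsto htends (Filter.Eventually.of_forall fun n => ?_)
    exact le_trans (hd n) (hwgeom j hj n)
  -- one refinement step towards a preimage
  have hstep : ∀ j, 1 ≤ j → ∀ p ∈ I j, ∀ y : ℝ, F p.1 ≤ y → y ≤ F p.2 →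
      (∃ x ∈ Set.Icc p.1 p.2, F x = y) ∨
      (∃ q ∈ I (j+1), p.1 ≤ q.1 ∧ q.1 ≤ q.2 ∧ q.2 ≤ p.2 ∧ F q.1 ≤ y ∧ y ≤ F q.2) := by
    intro j hj p hp y hy1 hy2
    obtain ⟨hK1, hK2, hK3, hK4⟩ := hkeyF j hj p hp
    obtain ⟨ho1, ho2⟩ := hord j hj p hp
    have hεj := hε j hj
    have hεj1 := hεpos j hj
    have hwj1 := hwpos (j+1) (by omega)
    have hwj2 := hwpos (j+2) (by omega)
    have hws := hwsum j hj
    have hL : (p.1, (p.1 + p.2) / 2 - ε j) ∈ I (j + 1) :=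
      (hmem j hj _).mpr ⟨p, hp, Or.inl rfl⟩
    have hR : ((p.1 + p.2) / 2 + ε j, p.2) ∈ I (j + 1) :=
      (hmem j hj _).mpr ⟨p, hp, Or.inr rfl⟩
    rcases le_or_gt y (f (j-1) p.1 + w (j+2)) with hc | hc
    · right
      refine ⟨(p.1, (p.1 + p.2) / 2 - ε j), hL, le_rfl, ?_, ?_, ?_, ?_⟩ <;> dsimp only
      · linarith
      · linarith
      · rw [hK1] at hy1; rw [hK1]; exact hy1
      · rw [hK3]; exact hc
    · rcases le_or_gt (f (j-1) p.1 + w (j+2) + 2 * ε (j+1)) y with hc2 | hc2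
      · right
        refine ⟨((p.1 + p.2) / 2 + ε j, p.2), hR, ?_, ?_, le_rfl, ?_, ?_⟩ <;> dsimp only
        · linarith
        · linarith
        · rw [hK4]; exact hc2
        · exact hy2
      · -- the gap : explicit preimage
        left
        have hd : 0 < ε j / ε (j+1) := div_pos hεj hεj1
        have hu : 0 < y - (f (j-1) p.1 + w (j+2)) := by linarith
        have hu2 : y - (f (j-1) p.1 + w (j+2)) < 2 * ε (j+1) := by linarith
        have h1 : 0 < (y - (f (j-1) p.1 + w (j+2))) * (ε j / ε (j+1)) := mul_pos hu hd
        have h2 : (y - (f (j-1) p.1 + w (j+2))) * (ε j / ε (j+1)) <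
            2 * ε (j+1) * (ε j / ε (j+1)) := mul_lt_mul_of_pos_right hu2 hd
        have h3 : 2 * ε (j+1) * (ε j / ε (j+1)) = 2 * ε j := by
          field_simp
        rw [h3] at h2
        set x := (p.1 + p.2) / 2 - ε j + (y - (f (j-1) p.1 + w (j+2))) * (ε j / ε (j+1)) with hxdef
        have habs : |x - (p.1 + p.2) / 2| < ε j := by
          rw [abs_lt, hxdef]
          constructor <;> linarith
        refine ⟨x, ⟨?_, ?_⟩, ?_⟩
        · rw [hxdef]; linarith
        · rw [hxdef]; linarith
        · rw [hgap j hj p hp x habs, hfmid j hj p hp x habs, hxdef]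
          field_simp
          ring
  -- surjectivity onto the value interval
  have hsurj : ∀ j, 1 ≤ j → ∀ p ∈ I j,
      Set.Icc (F p.1) (F p.2) ⊆ F '' Set.Icc p.1 p.2 := by
    intro j hj p hp y hy
    by_contra hny
    rw [Set.mem_image] at hny
    push_neg at hny
    -- invariant for the nested chain
    set P : ℕ → ℝ × ℝ → Prop := fun n q =>
      q ∈ I (j + n) ∧ p.1 ≤ q.1 ∧ q.1 ≤ q.2 ∧ q.2 ≤ p.2 ∧ F q.1 ≤ y ∧ y ≤ F q.2 with hPdef
    have hP0 : P 0 p := by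
      refine ⟨hp, le_rfl, ?_, le_rfl, hy.1, hy.2⟩
      obtain ⟨hlen, _, _⟩ := hstruct j hj p hp
      have := hwpos j hj
      linarith
    have hstep' : ∀ n, ∀ q : ℝ × ℝ, P n q → ∃ q' : ℝ × ℝ, P (n+1) q' ∧ q.1 ≤ q'.1 ∧ q'.2 ≤ q.2 := by
      intro n q hq
      obtain ⟨hqI, hq1, hq12, hq2, hqF1, hqF2⟩ := hq
      rcases hstep (j + n) (by omega) q hqI y hqF1 hqF2 with ⟨x, hx, hFx⟩ | ⟨q', hq', h1, h2, h3, h4, h5⟩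
      · exact absurd hFx (hny x ⟨le_trans hq1 hx.1, le_trans hx.2 hq2⟩)
      · refine ⟨q', ⟨?_, le_trans hq1 h1, h2, le_trans h3 hq2, h4, h5⟩, h1, h3⟩
        rw [show j + (n+1) = (j + n) + 1 by omega]
        exact hq'
    choose nxt hPn hl hr using hstep'
    let c : ∀ n : ℕ, {q : ℝ × ℝ // P n q} := fun n =>
      Nat.rec ⟨p, hP0⟩ (fun n ih => ⟨nxt n ih.1 ih.2, hPn n ih.1 ih.2⟩) n
    have hcs : ∀ n, (c (n+1)).1 = nxt n (c n).1 (c n).2 := fun n => rfl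
    have hamono : Monotone fun n => (c n).1.1 := by
      apply monotone_nat_of_le_succ
      intro n
      rw [hcs n]
      exact hl n (c n).1 (c n).2
    have hbanti : Antitone fun n => (c n).1.2 := by
      apply antitone_nat_of_succ_le
      intro n
      rw [hcs n]
      exact hr n (c n).1 (c n).2
    have hab : ∀ m n : ℕ, (c m).1.1 ≤ (c n).1.2 := by
      intro m n
      rcases le_total m n with h | h
      · exact le_trans (hamono h) (c n).2.2.2.1
      · exact le_trans (c m).2.2.2.1 (hbanti h)
    have hbdd : BddAbove (Set.range fun n => (c n).1.1) := by
      refine ⟨p.2, ?_⟩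
      rintro _ ⟨n, rfl⟩
      exact (c n).2.2.2.1.trans (c n).2.2.2.2.1
    set x := ⨆ n, (c n).1.1 with hxdef
    have hxge : ∀ n, (c n).1.1 ≤ x := fun n => le_ciSup hbdd n
    have hxle : ∀ n, x ≤ (c n).1.2 := fun n => ciSup_le fun m => hab m n
    have hxmem : x ∈ Set.Icc p.1 p.2 := by
      constructor
      · exact le_trans (c 0).2.2.1 (hxge 0)
      · exact le_trans (hxle 0) (c 0).2.2.2.2.1
    have hx01 : x ∈ Set.Icc (0:ℝ) 1 := by
      obtain ⟨h1, h2⟩ := hin01 j hj p hp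
      exact ⟨le_trans h1.1 hxmem.1, le_trans hxmem.2 h2.2⟩
    -- F x is squeezed
    have hsq : ∀ n : ℕ, |F x - y| ≤ w (j + n + 1) := by
      intro n
      obtain ⟨hqI, hq1, hq12, hq2, hqF1, hqF2⟩ := (c n).2
      have hq01 := hin01 (j + n) (by omega) (c n).1 hqI
      have hFk := hkeyF (j + n) (by omega) (c n).1 hqI
      have hF1 : F (c n).1.1 ≤ F x := hFmono (c n).1.1 hq01.1 x hx01 (hxge n)
      have hF2 : F x ≤ F (c n).1.2 := hFmono x hx01 (c n).1.2 hq01.2 (hxle n)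
      rw [abs_le]
      rw [hFk.1] at hF1 hqF1
      rw [hFk.2.1] at hF2 hqF2
      constructor <;> linarith
    have h0 : |F x - y| ≤ 0 := by
      refine hwzero (j + 1) (by omega) _ fun n => ?_
      rw [show j + 1 + n = j + n + 1 by omega]
      exact hsq n
    have : F x = y := by
      have := abs_nonneg (F x - y)
      have : |F x - y| = 0 := le_antisymm h0 this
      have := abs_eq_zero.mp this
      linarith
    exact absurd this (hny x hxmem)
  -- image of an interval under F
  have hFimg : ∀ j, 1 ≤ j → ∀ p ∈ I j,
      F '' Set.Icc p.1 p.2 = Set.Icc (F p.1) (F p.2) := by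
    intro j hj p hp
    refine Set.Subset.antisymm ?_ (hsurj j hj p hp)
    rintro _ ⟨x, hx, rfl⟩
    obtain ⟨h1, h2⟩ := hin01 j hj p hp
    have hx01 : x ∈ Set.Icc (0:ℝ) 1 := ⟨le_trans h1.1 hx.1, le_trans hx.2 h2.2⟩
    exact ⟨hFmono p.1 h1 x hx01 hx.1, hFmono x hx01 p.2 h2 hx.2⟩
  -- the key bijection between levels
  have hE : ∀ j, 1 ≤ j → I (j+1) =
      (fun p : ℝ × ℝ => (F p.1, F p.2)) '' I j ∪
      (fun p : ℝ × ℝ => (F p.1 + 2/3, F p.2 + 2/3)) '' I j := by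
    intro j hj
    induction j, hj using Nat.le_induction with
    | base =>
      have hp1 : ((0:ℝ), (1:ℝ)) ∈ I 1 := by rw [hI1]; exact rfl
      obtain ⟨hK1, hK2, _, _⟩ := hkeyF 1 le_rfl _ hp1
      simp only [hf0] at hK1 hK2
      norm_num at hK1 hK2
      have hw2 : w 2 = 1/3 := by
        have := hwrec 1 le_rfl
        rw [hw1, hε1] at this
        norm_num [this]
      rw [hw2] at hK2
      ext r
      rw [hIrec 1 le_rfl, hI1]
      simp only [Set.mem_iUnion, Set.mem_singleton_iff, Set.mem_insert_iff,
        Set.mem_union, Set.mem_image, exists_eq_left]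
      rw [hε1, hK1, hK2]
      norm_num
      constructor <;> rintro (rfl | rfl) <;> simp
    | succ j hj ih =>
      -- facts about children for any p ∈ I j
      have hfacts : ∀ p ∈ I j,
          ((p.1, (p.1 + p.2) / 2 - ε j) ∈ I (j+1)) ∧
          (((p.1 + p.2) / 2 + ε j, p.2) ∈ I (j+1)) ∧
          (F p.1 + F p.2) / 2 - ε (j+1) = F ((p.1 + p.2) / 2 - ε j) ∧
          (F p.1 + F p.2) / 2 + ε (j+1) = F ((p.1 + p.2) / 2 + ε j) := by
        intro p hp
        obtain ⟨hK1, hK2, hK3, hK4⟩ := hkeyF j hj p hp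
        have hwr := hwrec (j+1) (by omega)
        refine ⟨(hmem j hj _).mpr ⟨p, hp, Or.inl rfl⟩,
          (hmem j hj _).mpr ⟨p, hp, Or.inr rfl⟩, ?_, ?_⟩
        · rw [hK1, hK2, hK3]; linarith
        · rw [hK1, hK2, hK4]; linarith
      ext r
      constructor
      · intro hr
        rw [hmem (j+1) (by omega)] at hr
        obtain ⟨q, hq, hcase⟩ := hr
        rw [ih] at hq
        rcases hq with ⟨p, hp, rfl⟩ | ⟨p, hp, rfl⟩ <;>
          obtain ⟨hL, hR, e1, e2⟩ := hfacts p hp <;>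
          rcases hcase with rfl | rfl <;> dsimp only
        · refine Or.inl ⟨(p.1, (p.1 + p.2) / 2 - ε j), hL, ?_⟩
          rw [Prod.ext_iff]
          exact ⟨rfl, e1.symm⟩
        · refine Or.inl ⟨((p.1 + p.2) / 2 + ε j, p.2), hR, ?_⟩
          rw [Prod.ext_iff]
          exact ⟨e2.symm, rfl⟩
        · refine Or.inr ⟨(p.1, (p.1 + p.2) / 2 - ε j), hL, ?_⟩
          rw [Prod.ext_iff]
          refine ⟨rfl, ?_⟩
          dsimp only
          linarith [e1]
        · refine Or.inr ⟨((p.1 + p.2) / 2 + ε j, p.2), hR, ?_⟩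
          rw [Prod.ext_iff]
          refine ⟨?_, rfl⟩
          dsimp only
          linarith [e2]
      · intro hr
        rw [hmem (j+1) (by omega)]
        rcases hr with ⟨q, hq, rfl⟩ | ⟨q, hq, rfl⟩ <;>
          [obtain ⟨p, hp, hcase⟩ := (hmem j hj q).mp hq;
           obtain ⟨p, hp, hcase⟩ := (hmem j hj q).mp hq] <;>
          obtain ⟨hL, hR, e1, e2⟩ := hfacts p hp
        · refine ⟨(F p.1, F p.2), ?_, ?_⟩
          · rw [ih]; exact Or.inl ⟨p, hp, rfl⟩
          · rcases hcase with rfl | rfl <;> dsimp only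
            · exact Or.inl (by rw [Prod.ext_iff]; exact ⟨rfl, e1.symm⟩)
            · exact Or.inr (by rw [Prod.ext_iff]; exact ⟨e2.symm, rfl⟩)
        · refine ⟨(F p.1 + 2/3, F p.2 + 2/3), ?_, ?_⟩
          · rw [ih]; exact Or.inr ⟨p, hp, rfl⟩
          · rcases hcase with rfl | rfl <;> dsimp only
            · refine Or.inl ?_
              rw [Prod.ext_iff]
              refine ⟨rfl, ?_⟩
              dsimp only
              linarith [e1]
            · refine Or.inr ?_
              rw [Prod.ext_iff]
              refine ⟨?_, rfl⟩
              dsimp only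
              linarith [e2]
  -- final assembly
  intro k hk
  have h1 : F '' A k = ⋃ p ∈ I k, Set.Icc (F p.1) (F p.2) := by
    rw [hA k, Set.image_iUnion₂]
    exact Set.iUnion₂_congr fun p hp => hFimg k hk p hp
  have h2 : g '' A k = ⋃ p ∈ I k, Set.Icc (F p.1 + 2/3) (F p.2 + 2/3) := by
    have hgeq : g '' A k = (fun z => z + 2/3) '' (F '' A k) := by
      rw [← Set.image_comp]
      exact Set.image_congr fun x _ => by simp [hg]
    rw [hgeq, h1, Set.image_iUnion₂]
    refine Set.iUnion₂_congr fun p hp => ?_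
    exact Set.image_add_const_Icc _ _ _
  rw [hA (k+1), hE k hk, Set.biUnion_union, Set.biUnion_image, Set.biUnion_image, h1, h2]
end

section
/- Let f be the uniform limit of the sequence (f_k) and let g = f + 2/3. Then the set A_* = ⋂_{k∈ℕ} A_k is nonempty, compact, and satisfies A_* = f(A_*) ∪ g(A_*); that is, A_* is the attractor of the iterated function system {f, g}. -/
open Set MeasureTheory Filter

namespace S19

noncomputable def lep (w : ℕ → ℝ) : ℕ → List Bool → ℝ
  | _, [] => 0
  | k, d :: s => (if d then w k - w (k+1) else 0) + lep w (k+1) s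

lemma lep_append (w : ℕ → ℝ) : ∀ (s : List Bool) (k : ℕ) (d : Bool),
    lep w k (s ++ [d]) = lep w k s +
      (if d then w (k + s.length) - w (k + s.length + 1) else 0) := by
  intro s
  induction s with
  | nil => intro k d; simp [lep]
  | cons e t ih =>
    intro k d
    rw [List.cons_append, lep, lep, ih (k+1) d, List.length_cons]
    ring_nf

lemma lep_replicate (w : ℕ → ℝ) : ∀ (k m : ℕ), lep w m (List.replicate k false) = 0 := by
  intro k
  induction k with
  | zero => intro m; simp [lep]
  | succ n ih => intro m; simp [List.replicate_succ, lep, ih]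

lemma concat_of_len {s : List Bool} {k : ℕ} (h : s.length = k + 1) :
    ∃ t d, s = t ++ [d] ∧ t.length = k := by
  rcases List.eq_nil_or_concat s with rfl | ⟨t, d, rfl⟩
  · simp at h
  · exact ⟨t, d, by simp, by simpa using h⟩

end S19

open S19

open S19

theorem stmt_19
    (ε w : ℕ → ℝ)
    (hw1 : w 1 = 1) (hε1 : ε 1 = 1 / 6)
    (hwrec : ∀ k, 1 ≤ k → w (k + 1) = w k / 2 - ε k)
    (hεpos : ∀ k, 1 ≤ k → 0 < ε (k + 1))
    (hεgeom : ∀ k, 1 ≤ k → 2 ^ k * ε (k + 1) < 1 / 2 * (1 / 4 ^ k))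
    (hεquot : ∀ k, 1 ≤ k → ε (k + 1) / ε k < 1 / 2)
    (hεw : ∀ k, 1 ≤ k → ε (k + 1) < w k / 4 - ε k / 2)
    (I : ℕ → Set (ℝ × ℝ))
    (hI1 : I 1 = {((0 : ℝ), (1 : ℝ))})
    (hIrec : ∀ k, 1 ≤ k → I (k + 1) =
      ⋃ p ∈ I k, {(p.1, (p.1 + p.2) / 2 - ε k), ((p.1 + p.2) / 2 + ε k, p.2)})
    (A : ℕ → Set ℝ)
    (hA : ∀ k, A k = ⋃ p ∈ I k, Set.Icc p.1 p.2)
    (Astar : Set ℝ)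
    (hAstar : Astar = ⋂ k, A (k + 1))
    (f : ℕ → ℝ → ℝ)
    (hf0 : ∀ x, f 0 x = x / 3)
    (hfmaps : ∀ k, Set.MapsTo (f k) (Set.Icc (0 : ℝ) 1) (Set.Icc (0 : ℝ) 1))
    (hfleft : ∀ k, 1 ≤ k → ∀ p ∈ I k, ∀ x : ℝ, p.1 ≤ x → x ≤ (p.1 + p.2) / 2 - ε k →
      f k x = w (k + 2) / w (k + 1) * (x - p.1) + f (k - 1) p.1)
    (hfmid : ∀ k, 1 ≤ k → ∀ p ∈ I k, ∀ x : ℝ, |x - (p.1 + p.2) / 2| < ε k →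
      f k x = ε (k + 1) / ε k * (x - (p.1 + p.2) / 2 + ε k) + f (k - 1) p.1 + w (k + 2))
    (hfright : ∀ k, 1 ≤ k → ∀ p ∈ I k, ∀ x : ℝ, (p.1 + p.2) / 2 + ε k ≤ x → x ≤ p.2 →
      f k x = w (k + 2) / w (k + 1) * (x - (p.1 + p.2) / 2 - ε k) + f (k - 1) p.1
        + w (k + 2) + 2 * ε (k + 1))
    (hfout : ∀ k, 1 ≤ k → ∀ x ∈ Set.Icc (0 : ℝ) 1 \ (⋃ p ∈ I k, Set.Icc p.1 p.2),
      f k x = f (k - 1) x)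
    (F : ℝ → ℝ)
    (hFlim : ∀ x ∈ Set.Icc (0 : ℝ) 1, Filter.Tendsto (fun k => f k x) Filter.atTop (nhds (F x)))
    (g : ℝ → ℝ) (hg : ∀ x, g x = F x + 2 / 3)
    :
    Astar.Nonempty ∧ IsCompact Astar ∧ Astar = F '' Astar ∪ g '' Astar := by
  have hεp : ∀ k, 1 ≤ k → 0 < ε k := by
    intro k hk
    match k, hk with
    | 1, _ => rw [hε1]; norm_num
    | (n+2), _ => exact hεpos (n+1) (by omega)
  have hwgt : ∀ k, 1 ≤ k → 2 * ε k < w k := by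
    intro k hk
    have h1 := hεw k hk
    have h2 := hεpos k hk
    linarith
  have hwp : ∀ k, 1 ≤ k → 0 < w k := by
    intro k hk
    have := hwgt k hk
    have := hεp k hk
    linarith
  have hwbd : ∀ k : ℕ, w (k+1) ≤ (1/2)^k := by
    intro k
    induction k with
    | zero => simp [hw1]
    | succ n ih =>
      have h1 := hwrec (n+1) (by omega)
      have h2 := hεp (n+1) (by omega)
      have h3 : ((1:ℝ)/2)^(n+1) = (1/2)^n / 2 := by ring
      rw [h3]
      linarith
  set a : List Bool → ℝ := lep w 1 with ha_def
  set J : List Bool → Set ℝ := fun s => Set.Icc (a s) (a s + w (s.length + 1)) with hJ_def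
  have ha_app : ∀ (s : List Bool) (d : Bool),
      a (s ++ [d]) = a s + (if d then w (s.length + 1) - w (s.length + 2) else 0) := by
    intro s d
    have := lep_append w s 1 d
    simpa [ha_def, Nat.add_comm 1 s.length] using this
  have hmemJ : ∀ (s : List Bool) (x : ℝ), x ∈ J s ↔ a s ≤ x ∧ x ≤ a s + w (s.length + 1) := by
    intro s x; rfl
  have hJ_sub : ∀ (s : List Bool) (d : Bool), J (s ++ [d]) ⊆ J s := by
    intro s d x hx
    rw [hmemJ] at hx ⊢
    rw [ha_app] at hx
    have hlen : (s ++ [d]).length = s.length + 1 := by simp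
    rw [hlen] at hx
    have h1 := hwrec (s.length + 1) (by omega)
    have h2 := hεp (s.length + 1) (by omega)
    have h3 := hwp (s.length + 1) (by omega)
    have h4 := hwp (s.length + 2) (by omega)
    obtain ⟨hx1, hx2⟩ := hx
    cases d
    · simp only [Bool.false_eq_true, if_false, add_zero] at hx1 hx2
      exact ⟨hx1, by linarith⟩
    · simp only [if_true] at hx1 hx2
      exact ⟨by linarith, by linarith⟩
  have hJ_subs : ∀ (u s : List Bool), J (s ++ u) ⊆ J s := by
    intro u
    induction u with
    | nil => intro s; simp
    | cons d u' ih =>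
      intro s
      have : s ++ (d :: u') = (s ++ [d]) ++ u' := by simp
      rw [this]
      exact (ih (s ++ [d])).trans (hJ_sub s d)
  have ha_nil : a [] = 0 := rfl
  have hIchar : ∀ k : ℕ, I (k+1) =
      {p : ℝ × ℝ | ∃ s : List Bool, s.length = k ∧ p.1 = a s ∧ p.2 = a s + w (k+1)} := by
    intro k
    induction k with
    | zero =>
      rw [hI1]
      ext p
      simp only [Set.mem_singleton_iff, Set.mem_setOf_eq]
      constructor
      · rintro rfl
        exact ⟨[], rfl, by simp [ha_nil], by simp [ha_nil, hw1]⟩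
      · rintro ⟨s, hs, h1, h2⟩
        rw [List.length_eq_zero_iff] at hs
        subst hs
        rw [ha_nil] at h1 h2
        rw [hw1] at h2
        exact Prod.ext h1 (by rw [h2]; norm_num)
    | succ n ih =>
      have hrec : w (n+2) = w (n+1) / 2 - ε (n+1) := hwrec (n+1) (by omega)
      have e1 : ∀ s : List Bool, s.length = n → a (s ++ [false]) = a s := by
        intro s hs; rw [ha_app]; simp
      have e2 : ∀ s : List Bool, s.length = n →
          a (s ++ [true]) = a s + w (n+1) - w (n+2) := by
        intro s hs; rw [ha_app, hs]; simp; ring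
      rw [hIrec (n+1) (by omega), ih]
      ext q
      simp only [Set.mem_iUnion, Set.mem_setOf_eq, Set.mem_insert_iff, Set.mem_singleton_iff,
        exists_prop]
      constructor
      · rintro ⟨p, ⟨s, hs, h1, h2⟩, hq⟩
        rcases hq with rfl | rfl
        · refine ⟨s ++ [false], by simp [hs], by simp [e1 s hs, h1], ?_⟩
          show (p.1 + p.2) / 2 - ε (n+1) = a (s ++ [false]) + w (n + 1 + 1)
          rw [e1 s hs, h1, h2]
          have hi : w (n + 1 + 1) = w (n + 2) := rfl
          rw [hi, hrec]
          ring
        · refine ⟨s ++ [true], by simp [hs], ?_, ?_⟩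
          · show (p.1 + p.2) / 2 + ε (n+1) = a (s ++ [true])
            rw [e2 s hs, h1, h2, hrec]
            ring
          · show p.2 = a (s ++ [true]) + w (n + 1 + 1)
            have hi : w (n + 1 + 1) = w (n + 2) := rfl
            rw [hi, e2 s hs, h2]
            ring
      · rintro ⟨s', hs', h1, h2⟩
        obtain ⟨s, d, rfl, hs⟩ := concat_of_len hs'
        refine ⟨(a s, a s + w (n+1)), ⟨s, hs, rfl, rfl⟩, ?_⟩
        have hw11 : w (n + 1 + 1) = w (n + 2) := rfl
        rw [hw11] at h2
        cases d
        · left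
          rw [e1 s hs] at h1 h2
          refine Prod.ext h1 ?_
          show q.2 = ((a s, a s + w (n+1)).1 + (a s, a s + w (n+1)).2) / 2 - ε (n+1)
          rw [h2, hrec]
          show a s + (w (n+1)/2 - ε (n+1)) = (a s + (a s + w (n+1))) / 2 - ε (n+1)
          ring
        · right
          rw [e2 s hs] at h1 h2
          refine Prod.ext ?_ ?_
          · show q.1 = ((a s, a s + w (n+1)).1 + (a s, a s + w (n+1)).2) / 2 + ε (n+1)
            rw [h1, hrec]
            ring_nf
          · show q.2 = (a s, a s + w (n+1)).2
            rw [h2]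
            ring
  have ha_f : ∀ s : List Bool, a (s ++ [false]) = a s := by
    intro s; rw [ha_app]; simp
  have ha_t : ∀ s : List Bool, a (s ++ [true]) = a s + w (s.length + 1) - w (s.length + 2) := by
    intro s; rw [ha_app]; simp; ring
  have hAchar : ∀ k : ℕ, A (k+1) = ⋃ s ∈ {s : List Bool | s.length = k}, J s := by
    intro k
    rw [hA, hIchar k]
    ext x
    simp only [Set.mem_iUnion, Set.mem_setOf_eq, exists_prop]
    constructor
    · rintro ⟨p, ⟨s, hs, h1, h2⟩, hx⟩
      refine ⟨s, hs, ?_⟩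
      rw [hmemJ, hs]
      rw [h1, h2] at hx
      exact hx
    · rintro ⟨s, hs, hx⟩
      refine ⟨(a s, a s + w (k+1)), ⟨s, hs, rfl, rfl⟩, ?_⟩
      rw [hmemJ, hs] at hx
      exact hx
  have hJA : ∀ s : List Bool, J s ⊆ A (s.length + 1) := by
    intro s
    rw [hAchar]
    exact Set.subset_biUnion_of_mem (show s ∈ {t : List Bool | t.length = s.length} from rfl)
  have hAmono : ∀ k : ℕ, A (k+2) ⊆ A (k+1) := by
    intro k x hx
    rw [hAchar (k+1)] at hx
    simp only [Set.mem_iUnion, Set.mem_setOf_eq, exists_prop] at hx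
    obtain ⟨s, hs, hx⟩ := hx
    obtain ⟨t, d, rfl, ht⟩ := concat_of_len hs
    have : x ∈ J t := hJ_sub t d hx
    have h2 := hJA t this
    rw [ht] at h2
    exact h2
  have hdisj : ∀ n : ℕ, ∀ s t : List Bool, s.length = n → t.length = n →
      ∀ x : ℝ, x ∈ J s → x ∈ J t → s = t := by
    intro n
    induction n with
    | zero =>
      intro s t hs ht x _ _
      rw [List.length_eq_zero_iff] at hs ht
      rw [hs, ht]
    | succ n ih =>
      intro s t hs ht x hxs hxt
      obtain ⟨s', d, rfl, hs'⟩ := concat_of_len hs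
      obtain ⟨t', e, rfl, ht'⟩ := concat_of_len ht
      have heq := ih s' t' hs' ht' x (hJ_sub s' d hxs) (hJ_sub t' e hxt)
      subst heq
      have hrec : w (n+2) = w (n+1) / 2 - ε (n+1) := hwrec (n+1) (by omega)
      have hep := hεp (n+1) (by omega)
      rw [hmemJ] at hxs hxt
      have hlen : (s' ++ [d]).length = n + 1 := by simp [hs']
      have hlen2 : (s' ++ [e]).length = n + 1 := by simp [hs']
      rw [hlen] at hxs
      rw [hlen2] at hxt
      cases d <;> cases e
      · rfl
      · exfalso
        rw [ha_f] at hxs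
        rw [ha_t, hs'] at hxt
        have := hxs.2
        have := hxt.1
        linarith
      · exfalso
        rw [ha_t, hs'] at hxs
        rw [ha_f] at hxt
        have := hxs.1
        have := hxt.2
        linarith
      · rfl
  have hE : ∀ k : ℕ, ∀ s : List Bool, s.length = k → f k (a s) = a (false :: s) := by
    intro k
    induction k with
    | zero =>
      intro s hs
      rw [List.length_eq_zero_iff] at hs
      subst hs
      rw [ha_nil, hf0]
      have : a [false] = 0 := by simp [ha_def, lep]
      rw [this]
      norm_num
    | succ k ih =>
      intro s hs
      obtain ⟨t, d, rfl, ht⟩ := concat_of_len hs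
      have hp : (a t, a t + w (k+1)) ∈ I (k+1) := by
        rw [hIchar k]
        exact ⟨t, ht, rfl, rfl⟩
      have hrec : w (k+2) = w (k+1) / 2 - ε (k+1) := hwrec (k+1) (by omega)
      have hrec2 : w (k+3) = w (k+2) / 2 - ε (k+2) := hwrec (k+2) (by omega)
      have hw2 := hwp (k+2) (by omega)
      have hw3 := hwp (k+3) (by omega)
      have he2 := hεp (k+2) (by omega)
      cases d
      · rw [ha_f t]
        have hmid : ((a t, a t + w (k+1)).1 + (a t, a t + w (k+1)).2) / 2 - ε (k+1)
            = a t + w (k+2) := by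
          show (a t + (a t + w (k+1))) / 2 - ε (k+1) = a t + w (k+2)
          rw [hrec]; ring
        have := hfleft (k+1) (by omega) _ hp (a t) le_rfl (by rw [hmid]; linarith)
        rw [this]
        simp only [Nat.add_sub_cancel]
        rw [ih t ht]
        have : false :: (t ++ [false]) = (false :: t) ++ [false] := rfl
        rw [this, ha_f]
        ring
      · have hx : a (t ++ [true]) = a t + w (k+1) - w (k+2) := by rw [ha_t, ht]
        have hmid : ((a t, a t + w (k+1)).1 + (a t, a t + w (k+1)).2) / 2 + ε (k+1)
            = a t + w (k+1) - w (k+2) := by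
          show (a t + (a t + w (k+1))) / 2 + ε (k+1) = a t + w (k+1) - w (k+2)
          rw [hrec]; ring
        have := hfright (k+1) (by omega) _ hp (a (t ++ [true]))
          (by rw [hmid, hx]) (by rw [hx]; show a t + w (k+1) - w (k+2) ≤ a t + w (k+1); linarith)
        rw [this]
        simp only [Nat.add_sub_cancel]
        rw [ih t ht, hx]
        have h1 : false :: (t ++ [true]) = (false :: t) ++ [true] := rfl
        rw [h1, ha_t]
        have h2 : (false :: t).length = k + 1 := by simp [ht]
        rw [h2]
        have h3 : w (k + 1 + 2) = w (k+3) := rfl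
        have h4 : w (k + 1 + 1) = w (k+2) := rfl
        have h5 : ε (k + 1 + 1) = ε (k+2) := rfl
        rw [h3, h4, h5, hrec2, hrec]
        have hne : w (k+1) / 2 - ε (k+1) ≠ 0 := by
          rw [← hrec]; exact ne_of_gt hw2
        field_simp
        ring
  have hFV : ∀ k : ℕ, ∀ t : List Bool, t.length = k → ∀ (d : Bool) (x : ℝ),
      x ∈ J (t ++ [d]) → f (k+1) x ∈ J (false :: (t ++ [d])) := by
    intro k t ht d x hx
    have hp : (a t, a t + w (k+1)) ∈ I (k+1) := by
      rw [hIchar k]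
      exact ⟨t, ht, rfl, rfl⟩
    have hrec : w (k+2) = w (k+1) / 2 - ε (k+1) := hwrec (k+1) (by omega)
    have hrec2 : w (k+3) = w (k+2) / 2 - ε (k+2) := hwrec (k+2) (by omega)
    have hw1' := hwp (k+1) (by omega)
    have hw2 := hwp (k+2) (by omega)
    have hw3 := hwp (k+3) (by omega)
    have he1 := hεp (k+1) (by omega)
    have he2 := hεp (k+2) (by omega)
    have hEt : f k (a t) = a (false :: t) := hE k t ht
    rw [hmemJ] at hx
    have hlen : (t ++ [d]).length = k + 1 := by simp [ht]
    rw [hlen] at hx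
    have hlen2 : (false :: (t ++ [d])).length = k + 2 := by simp [ht]
    rw [hmemJ, hlen2]
    have hfr : w (k+3) / w (k+2) * w (k+2) = w (k+3) := by
      field_simp
    have hrpos : 0 ≤ w (k+3) / w (k+2) := le_of_lt (div_pos hw3 hw2)
    cases d
    · rw [ha_f] at hx
      have hup : x ≤ ((a t, a t + w (k+1)).1 + (a t, a t + w (k+1)).2) / 2 - ε (k+1) := by
        show x ≤ (a t + (a t + w (k+1))) / 2 - ε (k+1)
        have : (a t + (a t + w (k+1))) / 2 - ε (k+1) = a t + w (k+2) := by rw [hrec]; ring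
        rw [this]
        exact hx.2
      have hval := hfleft (k+1) (by omega) _ hp x hx.1 hup
      rw [hval]
      simp only [Nat.add_sub_cancel]
      have h3 : w (k + 1 + 2) = w (k+3) := rfl
      have h4 : w (k + 1 + 1) = w (k+2) := rfl
      rw [h3, h4]
      show a (false :: (t ++ [false])) ≤ w (k+3)/w (k+2) * (x - a t) + f k (a t) ∧
        w (k+3)/w (k+2) * (x - a t) + f k (a t) ≤ a (false :: (t ++ [false])) + w (k+2+1)
      rw [hEt]
      have hcons : false :: (t ++ [false]) = (false :: t) ++ [false] := rfl
      rw [hcons, ha_f]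
      have hb1 : 0 ≤ w (k+3)/w (k+2) * (x - a t) :=
        mul_nonneg hrpos (by linarith [hx.1])
      have hb2 : w (k+3)/w (k+2) * (x - a t) ≤ w (k+3) := by
        calc w (k+3)/w (k+2) * (x - a t) ≤ w (k+3)/w (k+2) * w (k+2) :=
              mul_le_mul_of_nonneg_left (by linarith [hx.2]) hrpos
        _ = w (k+3) := hfr
      have h5 : w (k + 2 + 1) = w (k+3) := rfl
      rw [h5]
      constructor <;> linarith
    · rw [ha_t, ht] at hx
      have hmid : ((a t, a t + w (k+1)).1 + (a t, a t + w (k+1)).2) / 2 + ε (k+1)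
          = a t + w (k+1) - w (k+2) := by
        show (a t + (a t + w (k+1))) / 2 + ε (k+1) = a t + w (k+1) - w (k+2)
        rw [hrec]; ring
      have hlo : ((a t, a t + w (k+1)).1 + (a t, a t + w (k+1)).2) / 2 + ε (k+1) ≤ x := by
        rw [hmid]; linarith [hx.1]
      have hhi : x ≤ (a t, a t + w (k+1)).2 := by
        show x ≤ a t + w (k+1)
        linarith [hx.2, hw2]
      have hval := hfright (k+1) (by omega) _ hp x hlo hhi
      rw [hval]
      simp only [Nat.add_sub_cancel]
      have h3 : w (k + 1 + 2) = w (k+3) := rfl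
      have h4 : w (k + 1 + 1) = w (k+2) := rfl
      have h5 : ε (k + 1 + 1) = ε (k+2) := rfl
      rw [h3, h4, h5]
      have hmid2 : ((a t, a t + w (k+1)).1 + (a t, a t + w (k+1)).2) / 2 = a t + w (k+1) / 2 := by
        show (a t + (a t + w (k+1))) / 2 = a t + w (k+1) / 2
        ring
      rw [hmid2, hEt]
      have hcons : false :: (t ++ [true]) = (false :: t) ++ [true] := rfl
      rw [hcons, ha_t]
      have h6 : (false :: t).length = k + 1 := by simp [ht]
      rw [h6]
      have h7 : w (k + 1 + 1) = w (k+2) := rfl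
      have h8 : w (k + 1 + 2) = w (k+3) := rfl
      rw [h7, h8]
      set y := x - (a t + w (k+1)/2) - ε (k+1) with hy
      have hy0 : 0 ≤ y := by
        rw [hy]
        have : a t + w (k+1) - w (k+2) = a t + w (k+1)/2 + ε (k+1) := by rw [hrec]; ring
        rw [this] at hx
        linarith [hx.1]
      have hy1 : y ≤ w (k+2) := by
        rw [hy]
        have : a t + w (k+1) - w (k+2) = a t + w (k+1)/2 + ε (k+1) := by rw [hrec]; ring
        rw [this] at hx
        linarith [hx.2]
      have hb1 : 0 ≤ w (k+3)/w (k+2) * y := mul_nonneg hrpos hy0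
      have hb2 : w (k+3)/w (k+2) * y ≤ w (k+3) := by
        calc w (k+3)/w (k+2) * y ≤ w (k+3)/w (k+2) * w (k+2) :=
              mul_le_mul_of_nonneg_left hy1 hrpos
        _ = w (k+3) := hfr
      have hkey : w (k+2) - w (k+3) = w (k+3) + 2 * ε (k+2) := by
        rw [hrec2]; ring
      constructor <;> linarith
  have hA1 : A 1 = Set.Icc (0:ℝ) 1 := by
    rw [hA, hI1]
    simp
  have hAstar' : ∀ y, y ∈ Astar → ∀ k, y ∈ A (k+1) := by
    intro y hy k
    rw [hAstar] at hy
    exact Set.mem_iInter.1 hy k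
  have hJnil : J [] = Set.Icc (0:ℝ) 1 := by
    show Set.Icc (a []) (a [] + w (List.length [] + 1)) = Set.Icc 0 1
    rw [ha_nil]
    norm_num [hw1]
  have hstep : ∀ y, y ∈ Astar → ∀ (s : List Bool) (k : ℕ), s.length = k → y ∈ J s →
      ∃ d, y ∈ J (s ++ [d]) := by
    intro y hy s k hs hys
    have h1 : y ∈ A (k+2) := hAstar' y hy (k+1)
    rw [hAchar (k+1)] at h1
    simp only [Set.mem_iUnion, Set.mem_setOf_eq, exists_prop] at h1
    obtain ⟨t, ht, hyt⟩ := h1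
    obtain ⟨t', d, rfl, ht'⟩ := concat_of_len ht
    have heq : t' = s := hdisj k t' s ht' hs y (hJ_sub t' d hyt) hys
    subst heq
    exact ⟨d, hyt⟩
  have hchain : ∀ y, y ∈ Astar → ∃ S : ℕ → List Bool, S 0 = [] ∧
      (∀ k, (S k).length = k) ∧ (∀ k, ∃ d, S (k+1) = S k ++ [d]) ∧ (∀ k, y ∈ J (S k)) := by
    intro y hy
    have hy0 : y ∈ J [] := by
      rw [hJnil]
      have := hAstar' y hy 0
      rwa [hA1] at this
    let C : ℕ → Type := fun k => {s : List Bool // s.length = k ∧ y ∈ J s}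
    let step : ∀ k, C k → C (k+1) := fun k c =>
      ⟨c.1 ++ [Classical.choose (hstep y hy c.1 k c.2.1 c.2.2)],
        by simp [c.2.1], Classical.choose_spec (hstep y hy c.1 k c.2.1 c.2.2)⟩
    let T : ∀ k, C k := fun k => Nat.rec ⟨[], rfl, hy0⟩ step k
    refine ⟨fun k => (T k).1, rfl, fun k => (T k).2.1, fun k => ?_, fun k => (T k).2.2⟩
    exact ⟨Classical.choose (hstep y hy (T k).1 k (T k).2.1 (T k).2.2), rfl⟩
  have hpref : ∀ (S : ℕ → List Bool), (∀ k, ∃ d, S (k+1) = S k ++ [d]) →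
      ∀ i j, i ≤ j → ∃ u, S j = S i ++ u := by
    intro S hS i j hij
    induction j with
    | zero =>
      have : i = 0 := by omega
      subst this
      exact ⟨[], by simp⟩
    | succ n ihn =>
      rcases Nat.lt_or_ge i (n+1) with h | h
      · obtain ⟨u, hu⟩ := ihn (by omega)
        obtain ⟨d, hd⟩ := hS n
        exact ⟨u ++ [d], by rw [hd, hu, List.append_assoc]⟩
      · have : i = n+1 := by omega
        subst this
        exact ⟨[], by simp⟩
  have hstab : ∀ (x : ℝ), x ∈ Set.Icc (0:ℝ) 1 → ∀ (S : ℕ → List Bool),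
      (∀ k, (S k).length = k) → (∀ k, ∃ d, S (k+1) = S k ++ [d]) → (∀ k, x ∈ J (S k)) →
      ∀ k, F x ∈ J (false :: S (k+1)) := by
    intro x hx S hlen hSd hxS k
    have hev : ∀ m, m ≥ k + 1 → f m x ∈ J (false :: S (k+1)) := by
      intro m hm
      obtain ⟨j, rfl⟩ : ∃ j, m = j + 1 := ⟨m - 1, by omega⟩
      obtain ⟨d, hd⟩ := hSd j
      have h1 : f (j+1) x ∈ J (false :: S (j+1)) := by
        have := hFV j (S j) (hlen j) d x (by rw [← hd]; exact hxS (j+1))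
        rwa [← hd] at this
      obtain ⟨u, hu⟩ := hpref S hSd (k+1) (j+1) (by omega)
      have h2 : false :: S (j+1) = (false :: S (k+1)) ++ u := by rw [hu]; rfl
      rw [h2] at h1
      exact hJ_subs u _ h1
    have hcl : IsClosed (J (false :: S (k+1))) := isClosed_Icc
    exact hcl.mem_of_tendsto (hFlim x hx) (Filter.eventually_atTop.2 ⟨k+1, hev⟩)
  have hsq : ∀ y z : ℝ, (∀ k : ℕ, ∃ s : List Bool, s.length = k ∧ y ∈ J s ∧ z ∈ J s) →
      y = z := by
    intro y z h
    have habs : ∀ k : ℕ, |y - z| ≤ (1/2)^k := by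
      intro k
      obtain ⟨s, hs, hy, hz⟩ := h k
      rw [hmemJ, hs] at hy hz
      have hb := hwbd k
      rw [abs_le]
      constructor <;> linarith [hy.1, hy.2, hz.1, hz.2]
    have h0 : Filter.Tendsto (fun k : ℕ => ((1:ℝ)/2)^k) Filter.atTop (nhds 0) := by
      apply tendsto_pow_atTop_nhds_zero_of_lt_one <;> norm_num
    have hle : |y - z| ≤ 0 := ge_of_tendsto' h0 habs
    have := abs_nonpos_iff.1 hle
    linarith [sub_eq_zero.1 this]
  have haJ : ∀ s : List Bool, a s ∈ J s := by
    intro s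
    rw [hmemJ]
    exact ⟨le_rfl, by linarith [hwp (s.length+1) (by omega)]⟩
  have hne : Astar.Nonempty := by
    refine ⟨0, ?_⟩
    rw [hAstar]
    refine Set.mem_iInter.2 fun k => ?_
    have h2 : a (List.replicate k false) = 0 := lep_replicate w k 1
    have h1 : (0:ℝ) ∈ J (List.replicate k false) := by
      rw [hmemJ, h2]
      exact ⟨le_rfl, by linarith [hwp ((List.replicate k false).length + 1) (by omega)]⟩
    have := hJA (List.replicate k false) h1
    rwa [List.length_replicate] at this
  have hIfin : ∀ k, (I (k+1)).Finite := by
    intro k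
    induction k with
    | zero => rw [hI1]; exact Set.finite_singleton _
    | succ n ih =>
      rw [hIrec (n+1) (by omega)]
      exact Set.Finite.biUnion ih (fun p _ => (Set.finite_singleton _).insert _)
  have hclosed : IsClosed Astar := by
    rw [hAstar]
    refine isClosed_iInter fun k => ?_
    rw [hA]
    exact Set.Finite.isClosed_biUnion (hIfin k) fun p _ => isClosed_Icc
  have hsub01 : Astar ⊆ Set.Icc (0:ℝ) 1 := by
    intro x hx
    have := hAstar' x hx 0
    rwa [hA1] at this
  have hcpt : IsCompact Astar := isCompact_Icc.of_isClosed_subset hclosed hsub01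
  have hw2v : w 2 = 1/3 := by
    have := hwrec 1 le_rfl
    rw [hw1, hε1] at this
    norm_num at this
    exact this
  have htr : ∀ s : List Bool, a (true :: s) = a (false :: s) + 2/3 := by
    intro s
    show lep w 1 (true :: s) = lep w 1 (false :: s) + 2/3
    rw [lep, lep]
    simp [hw1, hw2v]
    ring
  have hJtr : ∀ (s : List Bool) (z : ℝ), z ∈ J (false :: s) → z + 2/3 ∈ J (true :: s) := by
    intro s z hz
    rw [hmemJ] at hz ⊢
    rw [htr]
    simp only [List.length_cons] at hz ⊢
    exact ⟨by linarith [hz.1], by linarith [hz.2]⟩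
  refine ⟨hne, hcpt, ?_⟩
  apply Set.Subset.antisymm
  · intro y hy
    obtain ⟨S, hS0, hSlen, hSd, hSy⟩ := hchain y hy
    obtain ⟨d0, hd0⟩ := hSd 0
    rw [hS0] at hd0
    have hd0' : S 1 = [d0] := by simpa using hd0
    set T : ℕ → List Bool := fun k => (S (k+1)).tail with hT_def
    have hScons : ∀ k, S (k+1) = d0 :: T k := by
      intro k
      obtain ⟨u, hu⟩ := hpref S hSd 1 (k+1) (by omega)
      rw [hd0'] at hu
      have hu' : S (k+1) = d0 :: u := by simpa using hu
      have hTk : T k = (S (k+1)).tail := rfl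
      rw [hTk, hu']
      rfl
    have hTlen : ∀ k, (T k).length = k := by
      intro k
      have h1 := hSlen (k+1)
      rw [hScons k] at h1
      simpa using h1
    have hTd : ∀ k, ∃ d, T (k+1) = T k ++ [d] := by
      intro k
      obtain ⟨d, hd⟩ := hSd (k+1)
      refine ⟨d, ?_⟩
      have h1 := hScons (k+1)
      rw [hd, hScons k] at h1
      have h2 : (d0 :: T k) ++ [d] = d0 :: (T k ++ [d]) := rfl
      rw [h2] at h1
      have := (List.cons_injective h1).symm
      exact this
    have hmono_a : ∀ (s : List Bool) (d : Bool), a s ≤ a (s ++ [d]) := by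
      intro s d
      rw [ha_app]
      cases d
      · simp
      · have h1 := hwrec (s.length+1) (by omega)
        have h3 := hεp (s.length+1) (by omega)
        have h4 := hwp (s.length+1) (by omega)
        simp only [if_true]
        linarith
    have hcm : Monotone (fun k => a (T k)) := by
      apply monotone_nat_of_le_succ
      intro k
      obtain ⟨d, hd⟩ := hTd k
      show a (T k) ≤ a (T (k+1))
      rw [hd]
      exact hmono_a _ d
    have hT0 : T 0 = [] := List.length_eq_zero_iff.1 (hTlen 0)
    have hJT0 : ∀ k, J (T k) ⊆ Set.Icc (0:ℝ) 1 := by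
      intro k
      obtain ⟨u, hu⟩ := hpref T hTd 0 k (Nat.zero_le k)
      rw [hT0] at hu
      rw [hu, ← hJnil]
      exact hJ_subs u []
    have hbdd : BddAbove (Set.range fun k => a (T k)) := by
      refine ⟨1, ?_⟩
      rintro _ ⟨k, rfl⟩
      exact (hJT0 k (haJ (T k))).2
    set x : ℝ := ⨆ k, a (T k) with hx_def
    have hxJ : ∀ k, x ∈ J (T k) := by
      intro k
      rw [hmemJ, hTlen, hx_def]
      constructor
      · exact le_ciSup hbdd k
      · apply ciSup_le
        intro j
        rcases le_total j k with h | h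
        · have h2 : a (T j) ≤ a (T k) := hcm h
          have hw := hwp (k+1) (by omega)
          linarith
        · obtain ⟨u, hu⟩ := hpref T hTd k j h
          have h1 := haJ (T j)
          rw [hu] at h1
          have h2 := hJ_subs u (T k) h1
          rw [← hu] at h2
          rw [hmemJ, hTlen] at h2
          exact h2.2
    have hxA : x ∈ Astar := by
      rw [hAstar]
      refine Set.mem_iInter.2 fun k => ?_
      have := hJA (T k) (hxJ k)
      rwa [hTlen] at this
    have hx01 : x ∈ Set.Icc (0:ℝ) 1 := hsub01 hxA
    have hFx : ∀ k, F x ∈ J (false :: T (k+1)) := hstab x hx01 T hTlen hTd hxJ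
    cases d0
    · left
      refine ⟨x, hxA, ?_⟩
      have hFxS : ∀ k, F x ∈ J (S k) := by
        intro k
        have h1 : F x ∈ J (S (k+2)) := by
          rw [hScons (k+1)]
          exact hFx k
        obtain ⟨u, hu⟩ := hpref S hSd k (k+2) (by omega)
        rw [hu] at h1
        exact hJ_subs u _ h1
      exact (hsq y (F x) (fun k => ⟨S k, hSlen k, hSy k, hFxS k⟩)).symm
    · right
      refine ⟨x, hxA, ?_⟩
      have hgxS : ∀ k, g x ∈ J (S k) := by
        intro k
        have h1 : g x ∈ J (S (k+2)) := by
          rw [hScons (k+1), hg]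
          exact hJtr _ _ (hFx k)
        obtain ⟨u, hu⟩ := hpref S hSd k (k+2) (by omega)
        rw [hu] at h1
        exact hJ_subs u _ h1
      exact (hsq y (g x) (fun k => ⟨S k, hSlen k, hSy k, hgxS k⟩)).symm
  · rintro y (⟨x, hx, rfl⟩ | ⟨x, hx, rfl⟩)
    · obtain ⟨S, hS0, hSlen, hSd, hSx⟩ := hchain x hx
      have hFx := hstab x (hsub01 hx) S hSlen hSd hSx
      rw [hAstar]
      refine Set.mem_iInter.2 fun k => ?_
      have h1 : F x ∈ A (k+3) := by
        have h2 := hJA (false :: S (k+1)) (hFx k)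
        have h3 : (false :: S (k+1)).length = k + 2 := by simp [hSlen]
        rwa [h3] at h2
      exact hAmono k (hAmono (k+1) h1)
    · obtain ⟨S, hS0, hSlen, hSd, hSx⟩ := hchain x hx
      have hFx := hstab x (hsub01 hx) S hSlen hSd hSx
      rw [hAstar]
      refine Set.mem_iInter.2 fun k => ?_
      have h1 : g x ∈ A (k+3) := by
        have h0 : g x ∈ J (true :: S (k+1)) := by
          rw [hg]
          exact hJtr _ _ (hFx k)
        have h2 := hJA (true :: S (k+1)) h0
        have h3 : (true :: S (k+1)).length = k + 2 := by simp [hSlen]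
        rwa [h3] at h2
      exact hAmono k (hAmono (k+1) h1)
end
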